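/- arXiv:2303.16012 — 2 statements merged into one kernel-verified Lean document; each statement's English description precedes it below -/
import Mathlib

section
/- Let J ≥ 1, L > 0, and let f : ℝ → ℝ be (J+1)-times continuously differentiable with |f^{(J+1)}(x)| ≤ H_{J+1} for all x. For k ∈ ℕ, define the cosine Fourier coefficient a_k = (1/L) ∫_{-L}^{L} f(x) cos(kπ(x+L)/(2L)) dx. Then |a_k| ≤ Σ_{j=1}^{J} (2^{j+1}/π^{j+1}) (L^j / k^{j+1}) (|f^{(j)}(-L)| + |f^{(j)}(L)|) + (2^{J+2} H_{J+1} / π^{J+1}) (L^{J+1} / k^{J+1}). -/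
open Real MeasureTheory Set

private lemma ibp_step (J : ℕ) (L ν : ℝ) (hν : 0 < ν) (f : ℝ → ℝ)
    (hf : ContDiff ℝ (J + 1 : ℕ) f) (n : ℕ) (hn : n ≤ J) :
    ∫ x in (-L)..L, iteratedDeriv n f x * Real.cos (ν * (x + L) + n * (π / 2))
      = iteratedDeriv n f L * (-(1 / ν) * Real.cos (ν * (L + L) + (n + 1 : ℕ) * (π / 2)))
        - iteratedDeriv n f (-L) * (-(1 / ν) * Real.cos (ν * (-L + L) + (n + 1 : ℕ) * (π / 2)))
        + (1 / ν) * ∫ x in (-L)..L,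
            iteratedDeriv (n + 1) f x * Real.cos (ν * (x + L) + (n + 1 : ℕ) * (π / 2)) := by
  have hνne : ν ≠ 0 := ne_of_gt hν
  set u : ℝ → ℝ := iteratedDeriv n f
  set u' : ℝ → ℝ := iteratedDeriv (n + 1) f
  set v : ℝ → ℝ := fun x => -(1 / ν) * Real.cos (ν * (x + L) + (n + 1 : ℕ) * (π / 2)) with hv_def
  set v' : ℝ → ℝ := fun x => Real.cos (ν * (x + L) + n * (π / 2)) with hv'_def
  have hdiffu : Differentiable ℝ u := by
    apply hf.differentiable_iteratedDeriv n
    exact_mod_cast Nat.lt_succ_of_le hn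
  have hu : ∀ x ∈ Set.uIcc (-L) L, HasDerivAt u (u' x) x := by
    intro x _
    have := (hdiffu x).hasDerivAt
    rwa [show deriv u = u' from (iteratedDeriv_succ).symm] at this
  have hv : ∀ x ∈ Set.uIcc (-L) L, HasDerivAt v (v' x) x := by
    intro x _
    have h1 : HasDerivAt (fun y : ℝ => ν * (y + L) + (n + 1 : ℕ) * (π / 2)) ν x := by
      simpa using (((hasDerivAt_id x).add_const L).const_mul ν).add_const
        ((n + 1 : ℕ) * (π / 2))
    have h2 := (h1.cos).const_mul (-(1 / ν))
    have key : -(1 / ν) * (-Real.sin (ν * (x + L) + (n + 1 : ℕ) * (π / 2)) * ν)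
        = v' x := by
      have : (ν * (x + L) + (n + 1 : ℕ) * (π / 2))
          = (ν * (x + L) + n * (π / 2)) + π / 2 := by push_cast; ring
      rw [this, Real.sin_add_pi_div_two]
      field_simp [hv'_def]
      simp only [hv'_def]
      congr 1
      ring
    rw [key] at h2
    exact h2
  have hcontu' : Continuous u' := by
    apply hf.continuous_iteratedDeriv (n + 1)
    exact_mod_cast Nat.succ_le_succ hn
  have hiu' : IntervalIntegrable u' volume (-L) L := hcontu'.intervalIntegrable _ _
  have hiv' : IntervalIntegrable v' volume (-L) L := by
    apply Continuous.intervalIntegrable; fun_prop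
  have H := intervalIntegral.integral_mul_deriv_eq_deriv_mul hu hv hiu' hiv'
  rw [H]
  have : ∫ x in (-L)..L, u' x * v x
      = -(1 / ν) * ∫ x in (-L)..L,
          u' x * Real.cos (ν * (x + L) + (n + 1 : ℕ) * (π / 2)) := by
    rw [← intervalIntegral.integral_const_mul]
    apply intervalIntegral.integral_congr
    intro x _
    simp only [hv_def]
    ring
  rw [this]
  ring

/-- Decay bound for the cosine Fourier coefficients of a smooth function. -/
theorem cos_coefficient_bound
    (J : ℕ) (hJ : 1 ≤ J) (L : ℝ) (hL : 0 < L) (f : ℝ → ℝ) (H : ℝ)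
    (hf : ContDiff ℝ (J + 1 : ℕ) f)
    (hH : ∀ x : ℝ, |iteratedDeriv (J + 1) f x| ≤ H)
    (k : ℕ) (hk : 1 ≤ k) :
    |(1 / L) * ∫ x in (-L)..L, f x * Real.cos (k * π * (x + L) / (2 * L))| ≤
      (∑ j ∈ Finset.Icc 1 J,
        (2 ^ (j + 1) / π ^ (j + 1)) * (L ^ j / (k : ℝ) ^ (j + 1)) *
          (|iteratedDeriv j f (-L)| + |iteratedDeriv j f L|))
      + (2 ^ (J + 2) * H / π ^ (J + 1)) * (L ^ (J + 1) / (k : ℝ) ^ (J + 1)) := by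
  have hπ := Real.pi_pos
  have hk0 : (0 : ℝ) < k := by exact_mod_cast hk
  set ν : ℝ := k * π / (2 * L) with hν_def
  have hν : 0 < ν := by positivity
  have hνne : ν ≠ 0 := ne_of_gt hν
  set I : ℕ → ℝ := fun n => ∫ x in (-L)..L,
      iteratedDeriv n f x * Real.cos (ν * (x + L) + n * (π / 2)) with hI_def
  have hIe : ∀ n : ℕ, I n = ∫ x in (-L)..L,
      iteratedDeriv n f x * Real.cos (ν * (x + L) + n * (π / 2)) := fun n => rfl
  -- the integral in question is I 0
  have hI0 : (∫ x in (-L)..L, f x * Real.cos (k * π * (x + L) / (2 * L))) = I 0 := by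
    apply intervalIntegral.integral_congr
    intro x _
    simp only [hI_def, iteratedDeriv_zero, Nat.cast_zero, zero_mul, add_zero]
    congr 1
    rw [hν_def]
    field_simp
    try ring
  -- boundary values for n = 0 vanish
  have hI0eq : I 0 = (1 / ν) * I 1 := by
    have h := ibp_step J L ν hν f hf 0 (Nat.zero_le J)
    have hb1 : Real.cos (ν * (L + L) + (0 + 1 : ℕ) * (π / 2)) = 0 := by
      have : ν * (L + L) = k * π := by
        rw [hν_def]; field_simp; ring
      rw [this]
      push_cast
      rw [one_mul, Real.cos_add_pi_div_two, Real.sin_nat_mul_pi]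
      ring
    have hb2 : Real.cos (ν * (-L + L) + (0 + 1 : ℕ) * (π / 2)) = 0 := by
      norm_num [Real.cos_pi_div_two]
    rw [hb1, hb2] at h
    rw [hIe 0, hIe 1, h]
    push_cast
    ring
  -- recurrence bound for 1 ≤ n ≤ J
  have hBnd : ∀ n : ℕ, n ≤ J →
      |I n| ≤ (1 / ν) * (|iteratedDeriv n f L| + |iteratedDeriv n f (-L)|)
        + (1 / ν) * |I (n + 1)| := by
    intro n hn
    have h := ibp_step J L ν hν f hf n hn
    have hνinv : (0 : ℝ) ≤ 1 / ν := by positivity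
    calc |I n| = |iteratedDeriv n f L * (-(1 / ν) * Real.cos (ν * (L + L) + (n + 1 : ℕ) * (π / 2)))
        - iteratedDeriv n f (-L) * (-(1 / ν) * Real.cos (ν * (-L + L) + (n + 1 : ℕ) * (π / 2)))
        + (1 / ν) * I (n + 1)| := by rw [hIe n, hIe (n + 1), h]
      _ ≤ |iteratedDeriv n f L * (-(1 / ν) * Real.cos (ν * (L + L) + (n + 1 : ℕ) * (π / 2)))
        - iteratedDeriv n f (-L) * (-(1 / ν) * Real.cos (ν * (-L + L) + (n + 1 : ℕ) * (π / 2)))|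
        + |(1 / ν) * I (n + 1)| := abs_add_le _ _
      _ ≤ (|iteratedDeriv n f L * (-(1 / ν) * Real.cos (ν * (L + L) + (n + 1 : ℕ) * (π / 2)))|
        + |iteratedDeriv n f (-L) * (-(1 / ν) * Real.cos (ν * (-L + L) + (n + 1 : ℕ) * (π / 2)))|)
        + |(1 / ν) * I (n + 1)| := by gcongr; exact abs_sub _ _
      _ ≤ ((1 / ν) * |iteratedDeriv n f L| + (1 / ν) * |iteratedDeriv n f (-L)|)
        + (1 / ν) * |I (n + 1)| := by
          gcongr
          · rw [abs_mul, mul_comm]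
            apply mul_le_mul_of_nonneg_right _ (abs_nonneg _)
            rw [abs_mul, abs_neg, abs_of_nonneg hνinv]
            calc (1/ν) * |Real.cos _| ≤ (1/ν) * 1 := by
                  gcongr; exact Real.abs_cos_le_one _
              _ = 1/ν := mul_one _
          · rw [abs_mul, mul_comm]
            apply mul_le_mul_of_nonneg_right _ (abs_nonneg _)
            rw [abs_mul, abs_neg, abs_of_nonneg hνinv]
            calc (1/ν) * |Real.cos _| ≤ (1/ν) * 1 := by
                  gcongr; exact Real.abs_cos_le_one _
              _ = 1/ν := mul_one _
          · rw [abs_mul, abs_of_nonneg hνinv]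
      _ = (1 / ν) * (|iteratedDeriv n f L| + |iteratedDeriv n f (-L)|)
        + (1 / ν) * |I (n + 1)| := by ring
  -- induction: unfold the recurrence
  have hInd : ∀ n : ℕ, n ≤ J →
      |I 1| ≤ (∑ j ∈ Finset.Icc 1 n,
          (1 / ν) ^ j * (|iteratedDeriv j f L| + |iteratedDeriv j f (-L)|))
        + (1 / ν) ^ n * |I (n + 1)| := by
    intro n
    induction n with
    | zero => intro _; simp
    | succ m ih =>
      intro hm
      have hmJ : m ≤ J := Nat.le_of_succ_le hm
      have h1 := ih hmJ
      have h2 := hBnd (m + 1) hm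
      have hpow : (0 : ℝ) ≤ (1 / ν) ^ m := by positivity
      calc |I 1| ≤ (∑ j ∈ Finset.Icc 1 m,
          (1 / ν) ^ j * (|iteratedDeriv j f L| + |iteratedDeriv j f (-L)|))
          + (1 / ν) ^ m * |I (m + 1)| := h1
        _ ≤ (∑ j ∈ Finset.Icc 1 m,
          (1 / ν) ^ j * (|iteratedDeriv j f L| + |iteratedDeriv j f (-L)|))
          + (1 / ν) ^ m * ((1 / ν) * (|iteratedDeriv (m+1) f L| + |iteratedDeriv (m+1) f (-L)|)
            + (1 / ν) * |I (m + 2)|) := by gcongr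
        _ = (∑ j ∈ Finset.Icc 1 (m+1),
          (1 / ν) ^ j * (|iteratedDeriv j f L| + |iteratedDeriv j f (-L)|))
          + (1 / ν) ^ (m+1) * |I (m + 2)| := by
            rw [Finset.sum_Icc_succ_top (Nat.one_le_iff_ne_zero.mpr (Nat.succ_ne_zero m))]
            ring
  -- bound the remainder integral
  have hH0 : 0 ≤ H := le_trans (abs_nonneg _) (hH 0)
  have hrem : |I (J + 1)| ≤ H * (2 * L) := by
    rw [hIe (J + 1)]
    have := intervalIntegral.norm_integral_le_of_norm_le_const
      (a := -L) (b := L) (C := H)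
      (f := fun x => iteratedDeriv (J + 1) f x * Real.cos (ν * (x + L) + (J + 1 : ℕ) * (π / 2)))
      (by
        intro x _
        rw [Real.norm_eq_abs, abs_mul]
        calc |iteratedDeriv (J+1) f x| * |Real.cos _| ≤ H * 1 := by
              apply mul_le_mul (hH x) (Real.abs_cos_le_one _) (abs_nonneg _) hH0
          _ = H := mul_one _)
    rw [Real.norm_eq_abs] at this
    have habs : |L - (-L)| = 2 * L := by rw [abs_of_pos (by linarith)]; ring
    rw [habs] at this
    exact this
  -- combine
  have hchain : |(1 / L) * ∫ x in (-L)..L, f x * Real.cos (k * π * (x + L) / (2 * L))|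
      ≤ (1 / L) * ((1 / ν) * ((∑ j ∈ Finset.Icc 1 J,
          (1 / ν) ^ j * (|iteratedDeriv j f L| + |iteratedDeriv j f (-L)|))
        + (1 / ν) ^ J * (H * (2 * L)))) := by
    rw [abs_mul, abs_of_pos (by positivity : (0:ℝ) < 1 / L), hI0, hI0eq, abs_mul,
      abs_of_pos (by positivity : (0:ℝ) < 1 / ν)]
    have h1 := hInd J le_rfl
    gcongr
    calc |I 1| ≤ _ := h1
      _ ≤ _ := by gcongr <;> positivity
  refine le_trans hchain (le_of_eq ?_)
  rw [mul_add, mul_add, Finset.mul_sum, Finset.mul_sum]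
  congr 1
  · apply Finset.sum_congr rfl
    intro j hj
    rw [hν_def]
    rw [div_pow, one_pow, div_pow, mul_pow, mul_pow]
    have hkπ : ((k:ℝ) * π) ^ j ≠ 0 := by positivity
    have hkπ1 : (k:ℝ) ^ (j+1) ≠ 0 := by positivity
    have hπ1 : π ^ (j+1) ≠ 0 := by positivity
    field_simp
    try ring
  · rw [hν_def]
    rw [div_pow, one_pow, div_pow, mul_pow, mul_pow]
    field_simp
    try ring
end

section
/- Let f : ℝ → ℝ be a nonnegative, integrable, square-integrable, continuously differentiable function with x f²(x) → 0 as x → ±∞, and suppose for some L > 0 that f'(x) ≥ 0 for x ≤ −L and f'(x) ≤ 0 for x ≥ L. Define B(L) = Σ_{k=0}^{∞} (1/L) |∫_{ℝ∖[−L,L]} f(x) cos(kπ(x+L)/(2L)) dx|². Then B(L) ≤ (1/L)(∫_{ℝ∖[−L,L]} f(x) dx)² + (8/3) L max(f²(L), f²(−L)). -/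
open Real MeasureTheory Set Filter Topology

private lemma tail_bound_aux (h : ℝ → ℝ) (L c : ℝ) (hL : 0 < L) (k : ℕ) (hk : 0 < k)
    (hcd : ContDiff ℝ 1 h)
    (hint : IntegrableOn h (Set.Ioi L))
    (hmono : ∀ x : ℝ, L ≤ x → deriv h x ≤ 0)
    (h0 : Tendsto h atTop (𝓝 0))
    (hsin : Real.sin ((k : ℝ) * π * (L + c) / (2 * L)) = 0) :
    |∫ x in Set.Ioi L, h x * Real.cos ((k : ℝ) * π * (x + c) / (2 * L))| ≤
      2 * L / (k * π) * h L := by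
  have hkR : (0:ℝ) < (k:ℝ) := by exact_mod_cast hk
  set A : ℝ := (k:ℝ) * π / (2 * L) with hA_def
  have hA : 0 < A := div_pos (mul_pos hkR pi_pos) (by linarith)
  have key : ∀ x : ℝ, (k:ℝ) * π * (x + c) / (2 * L) = A * (x + c) := fun x => by
    rw [hA_def]; ring
  set g : ℝ → ℝ := fun x => A⁻¹ * Real.sin (A * (x + c)) with hg_def
  have hgcont : Continuous g := by fun_prop
  have hgbdd : ∀ x, |g x| ≤ A⁻¹ := by
    intro x
    calc |g x| = A⁻¹ * |Real.sin (A * (x + c))| := by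
          rw [hg_def, abs_mul, abs_of_nonneg (le_of_lt (inv_pos.mpr hA))]
      _ ≤ A⁻¹ * 1 := by gcongr; exact Real.abs_sin_le_one _
      _ = A⁻¹ := mul_one _
  have hgderiv : ∀ x : ℝ, HasDerivAt g (Real.cos (A * (x + c))) x := by
    intro x
    have h1 : HasDerivAt (fun y : ℝ => A * (y + c)) A x := by
      simpa using ((hasDerivAt_id x).add_const c).const_mul A
    have h3 := ((Real.hasDerivAt_sin (A * (x + c))).comp x h1).const_mul A⁻¹
    have e : Real.cos (A * (x + c)) = A⁻¹ * (Real.cos (A * (x + c)) * A) := by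
      rw [mul_comm (Real.cos _) A, inv_mul_cancel_left₀ hA.ne']
    rw [e]; exact h3
  have hdiff : ∀ x : ℝ, HasDerivAt h (deriv h x) x := fun x =>
    (hcd.differentiable one_ne_zero x).hasDerivAt
  have hd_int : IntegrableOn (deriv h) (Set.Ioi L) :=
    integrableOn_Ioi_deriv_of_nonpos' (fun x _ => hdiff x) (fun x hx => hmono x (le_of_lt hx)) h0
  have hd_eq : ∫ x in Set.Ioi L, deriv h x = 0 - h L :=
    integral_Ioi_of_hasDerivAt_of_tendsto' (fun x _ => hdiff x) hd_int h0
  have hint1 : IntegrableOn (fun x => deriv h x * g x) (Set.Ioi L) := by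
    have := hd_int.bdd_mul hgcont.aestronglyMeasurable.restrict
      (ae_of_all _ fun x => by simpa using hgbdd x)
    simpa [mul_comm, IntegrableOn] using this
  have hint2 : IntegrableOn (fun x => h x * Real.cos (A * (x + c))) (Set.Ioi L) := by
    refine Integrable.mono' hint.abs
      (hint.aestronglyMeasurable.mul ((Real.continuous_cos.comp (by continuity)).aestronglyMeasurable)) (ae_of_all _ fun x => ?_)
    rw [Real.norm_eq_abs, abs_mul]
    exact mul_le_of_le_one_right (abs_nonneg _) (Real.abs_cos_le_one _)
  have hFtend : Tendsto (fun x => h x * g x) atTop (𝓝 0) := by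
    apply squeeze_zero_norm (a := fun x => A⁻¹ * |h x|)
    · intro x
      rw [Real.norm_eq_abs, abs_mul]
      calc |h x| * |g x| ≤ |h x| * A⁻¹ := by
            exact mul_le_mul_of_nonneg_left (hgbdd x) (abs_nonneg _)
        _ = A⁻¹ * |h x| := mul_comm _ _
    · simpa using (h0.abs.const_mul A⁻¹)
  have hFL : h L * g L = 0 := by
    have hs : Real.sin (A * (L + c)) = 0 := by rw [← key L]; exact hsin
    simp [hg_def, hs]
  have hFTC : ∫ x in Set.Ioi L, (deriv h x * g x + h x * Real.cos (A * (x + c)))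
      = 0 - h L * g L :=
    integral_Ioi_of_hasDerivAt_of_tendsto
      ((hcd.continuous.mul hgcont).continuousWithinAt)
      (fun x _ => (hdiff x).mul (hgderiv x))
      (hint1.add hint2) hFtend
  have hmain : ∫ x in Set.Ioi L, h x * Real.cos (A * (x + c))
      = - ∫ x in Set.Ioi L, deriv h x * g x := by
    rw [integral_add hint1 hint2, hFL] at hFTC
    linarith
  have hgoal_eq : ∫ x in Set.Ioi L, h x * Real.cos ((k:ℝ) * π * (x + c) / (2 * L))
      = ∫ x in Set.Ioi L, h x * Real.cos (A * (x + c)) := by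
    refine setIntegral_congr_fun measurableSet_Ioi fun x _ => ?_
    rw [key x]
  have hbound : ‖∫ x in Set.Ioi L, deriv h x * g x‖ ≤ A⁻¹ * h L := by
    calc ‖∫ x in Set.Ioi L, deriv h x * g x‖ ≤ ∫ x in Set.Ioi L, ‖deriv h x * g x‖ :=
        norm_integral_le_integral_norm _
      _ ≤ ∫ x in Set.Ioi L, A⁻¹ * (-(deriv h x)) := by
          refine setIntegral_mono_on hint1.norm ((hd_int.neg).const_mul A⁻¹)
            measurableSet_Ioi fun x hx => ?_
          rw [Real.norm_eq_abs, abs_mul]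
          have h1 : |deriv h x| = -(deriv h x) := abs_of_nonpos (hmono x (le_of_lt hx))
          rw [h1]
          calc -(deriv h x) * |g x| ≤ -(deriv h x) * A⁻¹ := by
                exact mul_le_mul_of_nonneg_left (hgbdd x) (by linarith [hmono x (le_of_lt hx)])
            _ = A⁻¹ * -(deriv h x) := mul_comm _ _
      _ = A⁻¹ * ∫ x in Set.Ioi L, -(deriv h x) := integral_const_mul _ _
      _ = A⁻¹ * h L := by rw [integral_neg, hd_eq]; ring
  have hAinv : A⁻¹ = 2 * L / ((k:ℝ) * π) := by
    rw [hA_def, inv_div]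
  rw [hgoal_eq, hmain, abs_neg, ← hAinv, ← Real.norm_eq_abs]
  exact hbound

/-- Bound for the truncation-range term `B(L)` of the COS method for a
monotone-tailed density. -/
theorem B_L_bound
    (f : ℝ → ℝ) (L : ℝ) (hL : 0 < L)
    (hf_nonneg : ∀ x : ℝ, 0 ≤ f x)
    (hf_int : Integrable f)
    (hf_sq : Integrable (fun x => f x ^ 2))
    (hf_cd : ContDiff ℝ 1 f)
    (htop : Tendsto (fun x : ℝ => x * f x ^ 2) atTop (𝓝 0))
    (hbot : Tendsto (fun x : ℝ => x * f x ^ 2) atBot (𝓝 0))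
    (hleft : ∀ x : ℝ, x ≤ -L → 0 ≤ deriv f x)
    (hright : ∀ x : ℝ, L ≤ x → deriv f x ≤ 0) :
    (∑' k : ℕ, (1 / L) *
        |∫ x in (Set.Icc (-L) L)ᶜ, f x * Real.cos (k * π * (x + L) / (2 * L))| ^ 2) ≤
      (1 / L) * (∫ x in (Set.Icc (-L) L)ᶜ, f x) ^ 2 +
        (8 / 3) * L * max (f L ^ 2) (f (-L) ^ 2) := by
  have hLne : L ≠ 0 := ne_of_gt hL
  -- f tends to 0 at ±∞
  have hsq_top : Tendsto (fun x : ℝ => f x ^ 2) atTop (𝓝 0) := by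
    have h1 := htop.mul tendsto_inv_atTop_zero
    rw [mul_zero] at h1
    apply h1.congr'
    filter_upwards [eventually_gt_atTop (0:ℝ)] with x hx
    field_simp
  have hinv_bot : Tendsto (fun x : ℝ => x⁻¹) atBot (𝓝 0) := by
    have h1 : Tendsto (fun x : ℝ => (-x)⁻¹) atBot (𝓝 0) :=
      (tendsto_inv_atTop_zero (𝕜 := ℝ)).comp tendsto_neg_atBot_atTop
    have h2 := h1.neg
    rw [neg_zero] at h2
    exact h2.congr fun x => by rw [inv_neg, neg_neg]
  have hsq_bot : Tendsto (fun x : ℝ => f x ^ 2) atBot (𝓝 0) := by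
    have h1 := hbot.mul hinv_bot
    rw [mul_zero] at h1
    apply h1.congr'
    filter_upwards [eventually_lt_atBot (0:ℝ)] with x hx
    have hx0 : x ≠ 0 := ne_of_lt hx
    field_simp
  have hf_top : Tendsto f atTop (𝓝 0) := by
    have h2 : Tendsto (fun x => Real.sqrt (f x ^ 2)) atTop (𝓝 0) := by
      have := (Real.continuous_sqrt.tendsto 0).comp hsq_top
      simpa [Function.comp_def] using this
    exact h2.congr fun x => Real.sqrt_sq (hf_nonneg x)
  have hf_bot : Tendsto f atBot (𝓝 0) := by
    have h2 : Tendsto (fun x => Real.sqrt (f x ^ 2)) atBot (𝓝 0) := by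
      have := (Real.continuous_sqrt.tendsto 0).comp hsq_bot
      simpa [Function.comp_def] using this
    exact h2.congr fun x => Real.sqrt_sq (hf_nonneg x)
  -- integrability of the integrand
  have hφint : ∀ k : ℕ, Integrable (fun x => f x * Real.cos ((k:ℝ) * π * (x + L) / (2 * L))) := by
    intro k
    refine Integrable.mono' hf_int.abs
      (hf_int.aestronglyMeasurable.mul
        ((Real.continuous_cos.comp (by continuity)).aestronglyMeasurable))
      (ae_of_all _ fun x => ?_)
    rw [Real.norm_eq_abs, abs_mul]
    exact mul_le_of_le_one_right (abs_nonneg _) (Real.abs_cos_le_one _)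
  -- split the integral over the complement
  have hcompl : (Set.Icc (-L) L)ᶜ = Set.Iio (-L) ∪ Set.Ioi L := by
    ext x
    simp only [Set.mem_compl_iff, Set.mem_Icc, not_and_or, not_le, Set.mem_union,
      Set.mem_Iio, Set.mem_Ioi]
  have hdisj : Disjoint (Set.Iio (-L)) (Set.Ioi L) := by
    refine Set.disjoint_left.mpr fun x h1 h2 => ?_
    simp only [Set.mem_Iio] at h1
    simp only [Set.mem_Ioi] at h2
    linarith
  have hsplit : ∀ g : ℝ → ℝ, Integrable g →
      ∫ x in (Set.Icc (-L) L)ᶜ, g x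
        = (∫ x in Set.Iio (-L), g x) + ∫ x in Set.Ioi L, g x := by
    intro g hg
    rw [hcompl, setIntegral_union hdisj measurableSet_Ioi hg.integrableOn hg.integrableOn]
  -- right tail bound
  have hR : ∀ k : ℕ, 0 < k →
      |∫ x in Set.Ioi L, f x * Real.cos ((k:ℝ) * π * (x + L) / (2 * L))| ≤
        2 * L / (k * π) * f L := by
    intro k hk
    refine tail_bound_aux f L L hL k hk hf_cd hf_int.integrableOn hright hf_top ?_
    have he : (k:ℝ) * π * (L + L) / (2 * L) = k * π := by field_simp; ring
    rw [he]
    exact Real.sin_nat_mul_pi k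
  -- left tail bound via reflection
  set h : ℝ → ℝ := fun x => f (-x) with hh_def
  have hdh : ∀ x : ℝ, HasDerivAt h (-(deriv f (-x))) x := by
    intro x
    have := ((hf_cd.differentiable one_ne_zero (-x)).hasDerivAt).comp x (hasDerivAt_neg x)
    rw [mul_neg_one] at this; exact this
  have hcdh : ContDiff ℝ 1 h := hf_cd.comp (contDiff_id.neg)
  have hinth : IntegrableOn h (Set.Ioi L) := by
    have h1 := (MeasurePreserving.integrableOn_comp_preimage
      (Measure.measurePreserving_neg (volume : Measure ℝ))
      (Homeomorph.neg ℝ).measurableEmbedding).2 (hf_int.integrableOn (s := Set.Iio (-L)))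
    have hpre : (Neg.neg ⁻¹' (Set.Iio (-L)) : Set ℝ) = Set.Ioi L := by
      ext x; simp
    rwa [hpre] at h1
  have hmonoh : ∀ x : ℝ, L ≤ x → deriv h x ≤ 0 := by
    intro x hx
    rw [(hdh x).deriv]
    have := hleft (-x) (by linarith)
    linarith
  have h0h : Tendsto h atTop (𝓝 0) := hf_bot.comp tendsto_neg_atTop_atBot
  have hLft : ∀ k : ℕ, 0 < k →
      |∫ x in Set.Iio (-L), f x * Real.cos ((k:ℝ) * π * (x + L) / (2 * L))| ≤
        2 * L / (k * π) * f (-L) := by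
    intro k hk
    have e1 : ∫ x in Set.Iio (-L), f x * Real.cos ((k:ℝ) * π * (x + L) / (2 * L))
        = ∫ x in Set.Ioi L, h x * Real.cos ((k:ℝ) * π * (x + -L) / (2 * L)) := by
      rw [← integral_Iic_eq_integral_Iio,
        ← integral_comp_neg_Ioi L (fun x => f x * Real.cos ((k:ℝ) * π * (x + L) / (2 * L)))]
      refine setIntegral_congr_fun measurableSet_Ioi fun x _ => ?_
      have he : (k:ℝ) * π * (-x + L) / (2 * L) = -((k:ℝ) * π * (x + -L) / (2 * L)) := by ring
      simp only [he, Real.cos_neg, hh_def]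
    rw [e1]
    have hb := tail_bound_aux h L (-L) hL k hk hcdh hinth hmonoh h0h (by simp)
    simpa [hh_def] using hb
  -- combined bound
  set N : ℝ := max (f L) (f (-L)) with hN_def
  set M : ℝ := max (f L ^ 2) (f (-L) ^ 2) with hM_def
  have hNM : N ^ 2 = M := by
    rcases le_total (f L) (f (-L)) with hc | hc
    · rw [hN_def, hM_def, max_eq_right hc, max_eq_right (by nlinarith [hf_nonneg L, hf_nonneg (-L)])]
    · rw [hN_def, hM_def, max_eq_left hc, max_eq_left (by nlinarith [hf_nonneg L, hf_nonneg (-L)])]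
  have hN0 : 0 ≤ N := le_trans (hf_nonneg L) (le_max_left _ _)
  have hM0 : 0 ≤ M := le_trans (sq_nonneg (f L)) (le_max_left _ _)
  have hI : ∀ k : ℕ, 0 < k →
      |∫ x in (Set.Icc (-L) L)ᶜ, f x * Real.cos ((k:ℝ) * π * (x + L) / (2 * L))| ≤
        4 * L / (k * π) * N := by
    intro k hk
    have hkR : (0:ℝ) < (k:ℝ) := by exact_mod_cast hk
    rw [hsplit _ (hφint k)]
    calc |(∫ x in Set.Iio (-L), f x * Real.cos ((k:ℝ) * π * (x + L) / (2 * L)))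
          + ∫ x in Set.Ioi L, f x * Real.cos ((k:ℝ) * π * (x + L) / (2 * L))|
        ≤ |∫ x in Set.Iio (-L), f x * Real.cos ((k:ℝ) * π * (x + L) / (2 * L))|
          + |∫ x in Set.Ioi L, f x * Real.cos ((k:ℝ) * π * (x + L) / (2 * L))| := abs_add_le _ _
      _ ≤ 2 * L / (k * π) * f (-L) + 2 * L / (k * π) * f L := by
          exact add_le_add (hLft k hk) (hR k hk)
      _ ≤ 2 * L / (k * π) * N + 2 * L / (k * π) * N := by
          have hpos : 0 ≤ 2 * L / ((k:ℝ) * π) := by positivity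
          exact add_le_add
            (mul_le_mul_of_nonneg_left (le_max_right _ _) hpos)
            (mul_le_mul_of_nonneg_left (le_max_left _ _) hpos)
      _ = 4 * L / (k * π) * N := by ring
  -- per-term bound for the series
  set T : ℕ → ℝ := fun k => (1 / L) *
    |∫ x in (Set.Icc (-L) L)ᶜ, f x * Real.cos ((k:ℝ) * π * (x + L) / (2 * L))| ^ 2 with hT_def
  set C : ℝ := 16 * L * M / π ^ 2 with hC_def
  have hTbound : ∀ k : ℕ, T (k + 1) ≤ C * (1 / ((k:ℝ) + 1) ^ 2) := by
    intro k
    have hk1 : 0 < k + 1 := Nat.succ_pos k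
    have hkR : (0:ℝ) < (k:ℝ) + 1 := by positivity
    have h1 := hI (k + 1) hk1
    have hcast : ((k + 1 : ℕ) : ℝ) = (k:ℝ) + 1 := by push_cast; ring
    rw [hcast] at h1
    have h2 : |∫ x in (Set.Icc (-L) L)ᶜ,
        f x * Real.cos (((k + 1 : ℕ):ℝ) * π * (x + L) / (2 * L))| ^ 2
        ≤ (4 * L / (((k:ℝ) + 1) * π) * N) ^ 2 := by
      rw [hcast]
      exact pow_le_pow_left₀ (abs_nonneg _) h1 2
    have h3 : T (k + 1) ≤ (1 / L) * (4 * L / (((k:ℝ) + 1) * π) * N) ^ 2 := by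
      rw [hT_def]
      exact mul_le_mul_of_nonneg_left h2 (by positivity)
    refine h3.trans_eq ?_
    rw [hC_def, ← hNM]
    field_simp
    ring
  have hTnonneg : ∀ k : ℕ, 0 ≤ T k := fun k => by rw [hT_def]; positivity
  -- Basel sum
  have hB : HasSum (fun n : ℕ => 1 / ((n:ℝ) + 1) ^ 2) (π ^ 2 / 6) := by
    have h1 := hasSum_zeta_two
    have h2 := (hasSum_nat_add_iff' (f := fun n : ℕ => 1 / (n:ℝ) ^ 2) 1).mpr h1
    simpa using h2
  have hs1 : Summable (fun k : ℕ => T (k + 1)) :=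
    Summable.of_nonneg_of_le (fun k => hTnonneg _) hTbound (hB.summable.mul_left C)
  have hs : Summable T := (summable_nat_add_iff 1).mp hs1
  have hT0 : T 0 = (1 / L) * (∫ x in (Set.Icc (-L) L)ᶜ, f x) ^ 2 := by
    rw [hT_def]
    have he : ∀ x : ℝ, f x * Real.cos (((0:ℕ):ℝ) * π * (x + L) / (2 * L)) = f x := by
      intro x; simp
    simp only [he, sq_abs]
  have hsum_le : ∑' k : ℕ, T (k + 1) ≤ C * (π ^ 2 / 6) := by
    calc ∑' k : ℕ, T (k + 1) ≤ ∑' k : ℕ, C * (1 / ((k:ℝ) + 1) ^ 2) :=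
        Summable.tsum_le_tsum hTbound hs1 (hB.summable.mul_left C)
      _ = C * (π ^ 2 / 6) := by rw [tsum_mul_left, hB.tsum_eq]
  have hfinal : C * (π ^ 2 / 6) = 8 / 3 * L * M := by
    rw [hC_def]
    field_simp
    ring
  calc (∑' k : ℕ, T k) = T 0 + ∑' k : ℕ, T (k + 1) := Summable.tsum_eq_zero_add hs
    _ ≤ T 0 + C * (π ^ 2 / 6) := by linarith
    _ = (1 / L) * (∫ x in (Set.Icc (-L) L)ᶜ, f x) ^ 2 + 8 / 3 * L * M := by
        rw [hT0, hfinal]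
end
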